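/- For every fixed x ∈ ℝ^N, the map G : ℝ^N → ℝ^N defined by G(θ)_i = θ_i + Σ_{j≠i} ψ_x(x_i−x_j, θ_i−θ_j) is a C¹ diffeomorphism of ℝ^N onto ℝ^N. In particular, for every p ∈ ℝ^N the system p_i = θ_i + Σ_{j≠i} ψ_x(x_i−x_j, θ_i−θ_j) (i = 1,…,N) has a unique solution θ ∈ ℝ^N, and the solution map Θ : (x,p) ↦ θ is continuously differentiable on ℝ^{2N}. -/

import Mathlib

open Finset Function


open Finset Function

lemma aux_fderiv_antilip {E F : Type*} [NormedAddCommGroup E] [NormedSpace ℝ E]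
    [NormedAddCommGroup F] [NormedSpace ℝ F]
    {f : E → F} {f' : E →L[ℝ] F} {a : E} {K : ℝ}
    (hf : HasFDerivAt f f' a) (hK : ∀ y z, dist y z ≤ K * dist (f y) (f z)) (v : E) :
    ‖v‖ ≤ K * ‖f' v‖ := by
  have hline : HasDerivAt (fun t : ℝ => a + t • v) v 0 := by
    simpa using ((hasDerivAt_id (0 : ℝ)).smul_const v).const_add a
  have hfa : HasFDerivAt f f' ((fun t : ℝ => a + t • v) 0) := by simpa using hf
  have hd : HasDerivAt (fun t : ℝ => f (a + t • v)) (f' v) 0 :=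
    hfa.comp_hasDerivAt 0 hline
  rw [hasDerivAt_iff_tendsto_slope] at hd
  have h1 : Filter.Tendsto (fun t : ℝ => K * ‖slope (fun t : ℝ => f (a + t • v)) 0 t‖)
      (nhdsWithin 0 {(0:ℝ)}ᶜ) (nhds (K * ‖f' v‖)) :=
    Filter.Tendsto.const_mul K hd.norm
  refine ge_of_tendsto h1 ?_
  filter_upwards [self_mem_nhdsWithin] with t ht
  have ht' : (t : ℝ) ≠ 0 := ht
  have htp : 0 < |t| := abs_pos.mpr ht'
  have hsl : slope (fun t : ℝ => f (a + t • v)) 0 t = t⁻¹ • (f (a + t • v) - f a) := by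
    simp [slope_def_module]
  rw [hsl, norm_smul]
  have h2 := hK (a + t • v) a
  rw [dist_eq_norm, dist_eq_norm] at h2
  have hda : ‖a + t • v - a‖ = |t| * ‖v‖ := by
    simp [norm_smul, Real.norm_eq_abs]
  rw [hda] at h2
  calc ‖v‖ = |t|⁻¹ * (|t| * ‖v‖) := by field_simp
    _ ≤ |t|⁻¹ * (K * ‖f (a + t • v) - f a‖) :=
        mul_le_mul_of_nonneg_left h2 (by positivity)
    _ = K * (‖(t:ℝ)⁻¹‖ * ‖f (a + t • v) - f a‖) := by
        rw [Real.norm_eq_abs, abs_inv]; ring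

lemma aux_invFun_contDiff {E : Type*} [NormedAddCommGroup E] [NormedSpace ℝ E]
    [FiniteDimensional ℝ E] {f : E → E}
    (hf : ContDiff ℝ 1 f) (hbij : Function.Bijective f)
    (hder : ∀ a : E, Function.Injective (fderiv ℝ f a)) :
    ContDiff ℝ 1 (Function.invFun f) := by
  rw [contDiff_iff_contDiffAt]
  intro p
  set a := Function.invFun f p with ha
  have hfa : f a = p := Function.rightInverse_invFun hbij.2 p
  set L := fderiv ℝ f a with hL
  have hsurj : Function.Surjective L :=
    LinearMap.surjective_of_injective (f := (L : E →ₗ[ℝ] E)) (hder a)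
  set e : E ≃L[ℝ] E :=
    (LinearEquiv.ofBijective (L : E →ₗ[ℝ] E) ⟨hder a, hsurj⟩).toContinuousLinearEquiv with he
  have heL : (e : E →L[ℝ] E) = L := by ext v; rfl
  have hfd : HasFDerivAt f (e : E →L[ℝ] E) a := by
    rw [heL]; exact (hf.differentiable one_ne_zero a).hasFDerivAt
  have hCD : ContDiffAt ℝ 1 (hf.contDiffAt.localInverse hfd one_ne_zero) (f a) :=
    hf.contDiffAt.to_localInverse hfd one_ne_zero
  have hunique : ∀ᶠ y in nhds (f a),
      Function.invFun f y = (hf.contDiffAt.hasStrictFDerivAt' hfd one_ne_zero).localInverse f _ a y :=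
    (hf.contDiffAt.hasStrictFDerivAt' hfd one_ne_zero).localInverse_unique
      (Filter.Eventually.of_forall fun y => Function.leftInverse_invFun hbij.1 y)
  rw [show p = f a from hfa.symm]
  exact hCD.congr_of_eventuallyEq hunique

lemma aux_glob {E : Type*} [NormedAddCommGroup E] [NormedSpace ℝ E]
    [FiniteDimensional ℝ E] {f : E → E} {K : ℝ}
    (hf : ContDiff ℝ 1 f) (hanti : ∀ y z, dist y z ≤ K * dist (f y) (f z)) :
    Function.Bijective f ∧ ContDiff ℝ 1 (Function.invFun f) := by
  have hder : ∀ a : E, Function.Injective (fderiv ℝ f a) := by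
    intro a v w h
    have h0 : fderiv ℝ f a (v - w) = 0 := by rw [map_sub, h, sub_self]
    have := aux_fderiv_antilip (hf.differentiable one_ne_zero a).hasFDerivAt hanti (v - w)
    rw [h0, norm_zero, mul_zero] at this
    exact sub_eq_zero.mp (norm_le_zero_iff.mp this)
  have hinj : Function.Injective f := by
    intro y z h
    have := hanti y z
    rw [h, dist_self, mul_zero] at this
    exact dist_le_zero.mp this
  -- an invertible derivative at every point
  have hequiv : ∀ a : E, ∃ e : E ≃L[ℝ] E, (e : E →L[ℝ] E) = fderiv ℝ f a := by
    intro a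
    have hsurj : Function.Surjective (fderiv ℝ f a) :=
      LinearMap.surjective_of_injective (f := ((fderiv ℝ f a) : E →ₗ[ℝ] E)) (hder a)
    exact ⟨(LinearEquiv.ofBijective ((fderiv ℝ f a : E →ₗ[ℝ] E)) ⟨hder a, hsurj⟩).toContinuousLinearEquiv,
      by ext v; rfl⟩
  choose e he using hequiv
  have hstrict : ∀ a : E, HasStrictFDerivAt f ((e a : E →L[ℝ] E)) a := by
    intro a
    rw [he a]
    exact hf.contDiffAt.hasStrictFDerivAt one_ne_zero
  have hopen : IsOpenMap f := isOpenMap_of_hasStrictFDerivAt_equiv hstrict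
  set K' : ℝ := max K 1 with hK'
  have hK'pos : 0 < K' := lt_of_lt_of_le one_pos (le_max_right _ _)
  have hanti' : ∀ y z, dist y z ≤ K' * dist (f y) (f z) := fun y z =>
    (hanti y z).trans (mul_le_mul_of_nonneg_right (le_max_left _ _) dist_nonneg)
  have hclosed : IsClosed (Set.range f) := by
    apply IsSeqClosed.isClosed
    intro u q hu hq
    choose θ hθ using hu
    have hcu : CauchySeq (fun n => f (θ n)) := by
      have : (fun n => f (θ n)) = u := funext hθ
      rw [this]; exact hq.cauchySeq
    have hcθ : CauchySeq θ := by
      rw [Metric.cauchySeq_iff] at hcu ⊢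
      intro δ hδ
      obtain ⟨n₀, hn₀⟩ := hcu (δ / K') (div_pos hδ hK'pos)
      refine ⟨n₀, fun m hm n hn => ?_⟩
      calc dist (θ m) (θ n) ≤ K' * dist (f (θ m)) (f (θ n)) := hanti' _ _
        _ < K' * (δ / K') := by
            exact mul_lt_mul_of_pos_left (hn₀ m hm n hn) hK'pos
        _ = δ := by field_simp
    obtain ⟨l, hl⟩ := cauchySeq_tendsto_of_complete hcθ
    refine ⟨l, tendsto_nhds_unique ?_ hq⟩
    have : Filter.Tendsto (fun n => f (θ n)) Filter.atTop (nhds (f l)) :=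
      (hf.continuous.tendsto l).comp hl
    rwa [show (fun n => f (θ n)) = u from funext hθ] at this
  haveI : PreconnectedSpace E := ⟨(convex_univ : Convex ℝ (Set.univ : Set E)).isPreconnected⟩
  have hrange : Set.range f = Set.univ :=
    IsClopen.eq_univ ⟨hclosed, hopen.isOpen_range⟩ ⟨f 0, ⟨0, rfl⟩⟩
  have hsurj : Function.Surjective f := Set.range_eq_univ.mp hrange
  exact ⟨⟨hinj, hsurj⟩, aux_invFun_contDiff hf ⟨hinj, hsurj⟩ hder⟩

open Finset Function

lemma aux_key_ineq (N : ℕ) (ψx : ℝ → ℝ → ℝ)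
    (hodd : ∀ a t, ψx (-a) (-t) = - ψx a t)
    (hmono : ∀ a, Monotone (ψx a))
    (x' θ θ' : Fin N → ℝ) :
    dist θ θ' ≤ (N : ℝ) *
      dist (fun i => θ i + ∑ j ∈ Finset.univ.erase i, ψx (x' i - x' j) (θ i - θ j))
           (fun i => θ' i + ∑ j ∈ Finset.univ.erase i, ψx (x' i - x' j) (θ' i - θ' j)) := by
  set P : Fin N → ℝ := fun i => θ i + ∑ j ∈ Finset.univ.erase i, ψx (x' i - x' j) (θ i - θ j)
    with hP
  set P' : Fin N → ℝ := fun i => θ' i + ∑ j ∈ Finset.univ.erase i, ψx (x' i - x' j) (θ' i - θ' j)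
    with hP'
  set v : Fin N → ℝ := fun i => θ i - θ' i with hv
  set Δ : Fin N → Fin N → ℝ :=
    fun i j => ψx (x' i - x' j) (θ i - θ j) - ψx (x' i - x' j) (θ' i - θ' j) with hΔdef
  have hΔskew : ∀ i j : Fin N, Δ j i = - Δ i j := by
    intro i j
    have e1 : x' j - x' i = -(x' i - x' j) := by ring
    have e2 : θ j - θ i = -(θ i - θ j) := by ring
    have e3 : θ' j - θ' i = -(θ' i - θ' j) := by ring
    simp only [hΔdef, e1, e2, e3, hodd]
    ring
  have hterm : ∀ i j : Fin N, 0 ≤ Δ i j * (v i - v j) := by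
    intro i j
    have hvv : v i - v j = (θ i - θ j) - (θ' i - θ' j) := by simp only [hv]; ring
    rw [hvv]
    rcases le_total (θ i - θ j) (θ' i - θ' j) with h | h
    · have h1 : Δ i j ≤ 0 := sub_nonpos.mpr (hmono (x' i - x' j) h)
      have h2 : (θ i - θ j) - (θ' i - θ' j) ≤ 0 := sub_nonpos.mpr h
      nlinarith
    · have h1 : 0 ≤ Δ i j := sub_nonneg.mpr (hmono (x' i - x' j) h)
      have h2 : 0 ≤ (θ i - θ j) - (θ' i - θ' j) := sub_nonneg.mpr h
      exact mul_nonneg h1 h2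
  have hS : 0 ≤ ∑ i, ∑ j ∈ Finset.univ.erase i, Δ i j * v i := by
    have hcomm : ∑ i, ∑ j ∈ Finset.univ.erase i, Δ i j * v i
        = ∑ i, ∑ j ∈ Finset.univ.erase i, Δ j i * v j := by
      refine Finset.sum_comm' ?_
      intro i j
      simp only [Finset.mem_univ, Finset.mem_erase, true_and, and_true, ne_eq]
      tauto
    have h2 : 0 ≤ ∑ i, ∑ j ∈ Finset.univ.erase i, (Δ i j * v i + Δ j i * v j) := by
      refine Finset.sum_nonneg fun i _ => Finset.sum_nonneg fun j _ => ?_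
      have : Δ i j * v i + Δ j i * v j = Δ i j * (v i - v j) := by
        rw [hΔskew i j]; ring
      rw [this]
      exact hterm i j
    have h3 : ∑ i, ∑ j ∈ Finset.univ.erase i, (Δ i j * v i + Δ j i * v j)
        = (∑ i, ∑ j ∈ Finset.univ.erase i, Δ i j * v i)
          + ∑ i, ∑ j ∈ Finset.univ.erase i, Δ j i * v j := by
      rw [← Finset.sum_add_distrib]
      refine Finset.sum_congr rfl fun i _ => ?_
      rw [← Finset.sum_add_distrib]
    rw [h3, ← hcomm] at h2
    linarith
  have hQ : ∑ i, v i ^ 2 ≤ ∑ i, (P i - P' i) * v i := by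
    have hPv : ∀ i, (P i - P' i) * v i = v i ^ 2 + ∑ j ∈ Finset.univ.erase i, Δ i j * v i := by
      intro i
      have : P i - P' i = v i + ∑ j ∈ Finset.univ.erase i, Δ i j := by
        simp only [hP, hP', hv, hΔdef]
        rw [Finset.sum_sub_distrib]
        ring
      rw [this, add_mul, Finset.sum_mul]
      ring
    calc ∑ i, v i ^ 2 ≤ (∑ i, v i ^ 2) + ∑ i, ∑ j ∈ Finset.univ.erase i, Δ i j * v i := by
          linarith
      _ = ∑ i, (P i - P' i) * v i := by
          rw [← Finset.sum_add_distrib]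
          exact (Finset.sum_congr rfl fun i _ => (hPv i).symm)
  rcases isEmpty_or_nonempty (Fin N) with hN | hN
  · have : θ = θ' := Subsingleton.elim θ θ'
    rw [this, dist_self]
    positivity
  · -- find coordinate achieving sup distance
    set d : ℝ := dist θ θ' with hd
    set D : ℝ := dist P P' with hD
    obtain ⟨i₀, _, hi₀⟩ := Finset.exists_mem_eq_sup (Finset.univ : Finset (Fin N))
      Finset.univ_nonempty (fun i => nndist (θ i) (θ' i))
    have hdist : d = |v i₀| := by
      rw [hd, dist_pi_def, hi₀, coe_nndist]
      simp [hv, Real.dist_eq]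
    have hvle : ∀ i, |v i| ≤ d := by
      intro i
      have := dist_le_pi_dist θ θ' i
      rw [Real.dist_eq] at this
      exact this
    have hwle : ∀ i, |P i - P' i| ≤ D := by
      intro i
      have := dist_le_pi_dist P P' i
      rw [Real.dist_eq] at this
      exact this
    have hd2 : d ^ 2 ≤ (N : ℝ) * (D * d) := by
      have h1 : d ^ 2 ≤ ∑ i, v i ^ 2 := by
        rw [hdist]
        have : |v i₀| ^ 2 = v i₀ ^ 2 := sq_abs _
        rw [this]
        exact Finset.single_le_sum (f := fun i => v i ^ 2) (fun i _ => sq_nonneg _)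
          (Finset.mem_univ i₀)
      have h2 : ∑ i, (P i - P' i) * v i ≤ ∑ _i : Fin N, D * d := by
        refine Finset.sum_le_sum fun i _ => ?_
        calc (P i - P' i) * v i ≤ |(P i - P' i) * v i| := le_abs_self _
          _ = |P i - P' i| * |v i| := abs_mul _ _
          _ ≤ D * d := by
              refine mul_le_mul (hwle i) (hvle i) (abs_nonneg _) ?_
              exact le_trans (abs_nonneg _) (hwle i)
      have h3 : ∑ _i : Fin N, D * d = (N : ℝ) * (D * d) := by
        rw [Finset.sum_const, Finset.card_univ, Fintype.card_fin, nsmul_eq_mul]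
      linarith
    rcases (show (0:ℝ) ≤ d from dist_nonneg).eq_or_lt with h0 | h0
    · rw [← h0]
      positivity
    · have : d * d ≤ ((N : ℝ) * D) * d := by nlinarith
      exact le_of_mul_le_mul_right (by linarith [this]) h0

open Finset Function

section Main

variable (N : ℕ) (ψx : ℝ → ℝ → ℝ)

lemma aux_H_contDiff (hΨx : ContDiff ℝ 1 (fun q : ℝ × ℝ => ψx q.1 q.2)) :
    ContDiff ℝ 1 (fun q : (Fin N → ℝ) × (Fin N → ℝ) =>
      fun i => q.2 i + ∑ j ∈ Finset.univ.erase i, ψx (q.1 i - q.1 j) (q.2 i - q.2 j)) := by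
  rw [contDiff_pi]
  intro i
  have hproj : ∀ k : Fin N, ContDiff ℝ 1 (fun q : (Fin N → ℝ) × (Fin N → ℝ) => q.1 k) :=
    fun k => contDiff_pi.mp contDiff_fst k
  have hproj2 : ∀ k : Fin N, ContDiff ℝ 1 (fun q : (Fin N → ℝ) × (Fin N → ℝ) => q.2 k) :=
    fun k => contDiff_pi.mp contDiff_snd k
  refine (hproj2 i).add (ContDiff.sum fun j _ => ?_)
  exact hΨx.comp ((((hproj i).sub (hproj j))).prodMk (((hproj2 i).sub (hproj2 j))))

end Main


/-- For fixed positions `x`, the map `θ ↦ p`,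
`pᵢ = θᵢ + ∑_{j≠i} ψ_x(xᵢ−xⱼ, θᵢ−θⱼ)`, is a `C¹` diffeomorphism of `ℝᴺ`;
for every `p` the system has a unique solution `θ`, and the solution map
`Θ : (x,p) ↦ θ` is continuously differentiable on `ℝ^{2N}`. -/
theorem stmt2 (N : ℕ) (ε : ℝ) (hε : 0 < ε)
    (ψ ψx ψθ ψxθ : ℝ → ℝ → ℝ)
    (hC2 : ContDiff ℝ 2 (fun q : ℝ × ℝ => ψ q.1 q.2))
    (hψx : ∀ x t, HasDerivAt (fun x' => ψ x' t) (ψx x t) x)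
    (hψθ : ∀ x t, HasDerivAt (fun t' => ψ x t') (ψθ x t) t)
    (hψxθ : ∀ x t, HasDerivAt (fun t' => ψx x t') (ψxθ x t) t)
    (hpos : ∀ x t, 0 ≤ ψxθ x t)
    (hsym : ∀ x t, ψ (-x) (-t) = ψ x t)
    (hrange : ∀ x t, ε ≤ |x| → ψx x t = 0)
    (x : Fin N → ℝ)
    (G : (Fin N → ℝ) → (Fin N → ℝ))
    (hG : ∀ θ i, G θ i = θ i + ∑ j ∈ Finset.univ.erase i, ψx (x i - x j) (θ i - θ j)) :
    Function.Bijective G ∧ ContDiff ℝ 1 G ∧ ContDiff ℝ 1 (Function.invFun G) ∧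
      (∀ p : Fin N → ℝ, ∃! θ : Fin N → ℝ,
        ∀ i, p i = θ i + ∑ j ∈ Finset.univ.erase i, ψx (x i - x j) (θ i - θ j)) ∧
      ∃ Θ : (Fin N → ℝ) × (Fin N → ℝ) → (Fin N → ℝ), ContDiff ℝ 1 Θ ∧
        ∀ (x' p : Fin N → ℝ) (i : Fin N),
          p i = Θ (x', p) i
            + ∑ j ∈ Finset.univ.erase i, ψx (x' i - x' j) (Θ (x', p) i - Θ (x', p) j) := by
  -- basic properties of ψx
  have hodd : ∀ a t, ψx (-a) (-t) = - ψx a t := by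
    intro a t
    have hneg : HasDerivAt (fun x' : ℝ => -x') (-1 : ℝ) a := by
      exact hasDerivAt_neg a
    have h1 : HasDerivAt (fun x' : ℝ => ψ (-x') (-t)) (ψx (-a) (-t) * (-1)) a :=
      (hψx (-a) (-t)).comp a hneg
    have h2 : (fun x' : ℝ => ψ (-x') (-t)) = fun x' : ℝ => ψ x' t :=
      funext fun x' => hsym x' t
    rw [h2] at h1
    have := (hψx a t).unique h1
    linarith
  have hmono : ∀ a, Monotone (ψx a) := by
    intro a
    apply monotone_of_deriv_nonneg
    · exact fun t => (hψxθ a t).differentiableAt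
    · intro t
      rw [(hψxθ a t).deriv]
      exact hpos a t
  have hΨx : ContDiff ℝ 1 (fun q : ℝ × ℝ => ψx q.1 q.2) := by
    have hψx_eq : ∀ a b : ℝ, ψx a b = fderiv ℝ (fun q : ℝ × ℝ => ψ q.1 q.2) (a, b) (1, 0) := by
      intro a b
      have hdiff : HasFDerivAt (fun q : ℝ × ℝ => ψ q.1 q.2)
          (fderiv ℝ (fun q : ℝ × ℝ => ψ q.1 q.2) (a, b)) (a, b) :=
        (hC2.differentiable (by norm_num) (a, b)).hasFDerivAt
      have hline : HasDerivAt (fun t : ℝ => ((t, b) : ℝ × ℝ)) ((1 : ℝ), (0 : ℝ)) a :=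
        (hasDerivAt_id a).prodMk (hasDerivAt_const a b)
      have hcomp := hdiff.comp_hasDerivAt a hline
      exact (hψx a b).unique hcomp
    have h1 : ContDiff ℝ 1 (fun q : ℝ × ℝ =>
        fderiv ℝ (fun q : ℝ × ℝ => ψ q.1 q.2) q ((1 : ℝ), (0 : ℝ))) :=
      (hC2.fderiv_right (by norm_num)).clm_apply contDiff_const
    have : (fun q : ℝ × ℝ => ψx q.1 q.2) = fun q : ℝ × ℝ =>
        fderiv ℝ (fun q : ℝ × ℝ => ψ q.1 q.2) q ((1 : ℝ), (0 : ℝ)) :=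
      funext fun q => hψx_eq q.1 q.2
    rw [this]
    exact h1
  -- the joint map
  have hH : ContDiff ℝ 1 (fun q : (Fin N → ℝ) × (Fin N → ℝ) =>
      fun i => q.2 i + ∑ j ∈ Finset.univ.erase i, ψx (q.1 i - q.1 j) (q.2 i - q.2 j)) :=
    aux_H_contDiff N ψx hΨx
  -- slice maps
  have hgC1 : ∀ x' : Fin N → ℝ, ContDiff ℝ 1 (fun θ : Fin N → ℝ =>
      fun i => θ i + ∑ j ∈ Finset.univ.erase i, ψx (x' i - x' j) (θ i - θ j)) := by
    intro x'
    exact hH.comp (contDiff_const.prodMk contDiff_id)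
  have hganti : ∀ (x' : Fin N → ℝ) (θ θ' : Fin N → ℝ),
      dist θ θ' ≤ (N : ℝ) *
        dist (fun i => θ i + ∑ j ∈ Finset.univ.erase i, ψx (x' i - x' j) (θ i - θ j))
             (fun i => θ' i + ∑ j ∈ Finset.univ.erase i, ψx (x' i - x' j) (θ' i - θ' j)) :=
    fun x' => aux_key_ineq N ψx hodd hmono x'
  have hglob : ∀ x' : Fin N → ℝ,
      Function.Bijective (fun θ : Fin N → ℝ =>
        fun i => θ i + ∑ j ∈ Finset.univ.erase i, ψx (x' i - x' j) (θ i - θ j)) ∧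
      ContDiff ℝ 1 (Function.invFun (fun θ : Fin N → ℝ =>
        fun i => θ i + ∑ j ∈ Finset.univ.erase i, ψx (x' i - x' j) (θ i - θ j))) :=
    fun x' => aux_glob (hgC1 x') (hganti x')
  -- identify G with the slice at x
  have hGeq : G = fun θ : Fin N → ℝ =>
      fun i => θ i + ∑ j ∈ Finset.univ.erase i, ψx (x i - x j) (θ i - θ j) :=
    funext fun θ => funext fun i => hG θ i
  subst hGeq
  obtain ⟨hGbij, hGinv⟩ := hglob x
  refine ⟨hGbij, hgC1 x, hGinv, ?_, ?_⟩
  · -- unique solvability for fixed x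
    intro p
    obtain ⟨θ₀, hθ₀⟩ := hGbij.2 p
    refine ⟨θ₀, ?_, ?_⟩
    · intro i
      exact (congrFun hθ₀ i).symm
    · intro θ' hθ'
      apply hGbij.1
      rw [hθ₀]
      exact funext fun i => (hθ' i).symm
  · -- the solution map Θ
    set H : (Fin N → ℝ) × (Fin N → ℝ) → (Fin N → ℝ) := fun q =>
      fun i => q.2 i + ∑ j ∈ Finset.univ.erase i, ψx (q.1 i - q.1 j) (q.2 i - q.2 j) with hHdef
    set Fh : (Fin N → ℝ) × (Fin N → ℝ) → (Fin N → ℝ) × (Fin N → ℝ) := fun q => (q.1, H q) with hFh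
    have hFhC1 : ContDiff ℝ 1 Fh := contDiff_fst.prodMk hH
    have hFhbij : Function.Bijective Fh := by
      constructor
      · rintro ⟨a, θ⟩ ⟨a', θ'⟩ h
        have h1 : a = a' := congrArg Prod.fst h
        subst h1
        have h2 : H (a, θ) = H (a, θ') := congrArg Prod.snd h
        have h3 : θ = θ' := (hglob a).1.1 h2
        rw [h3]
      · rintro ⟨a, p⟩
        obtain ⟨θ, hθ⟩ := (hglob a).1.2 p
        exact ⟨(a, θ), Prod.ext rfl hθ⟩
    have hFhder : ∀ q : (Fin N → ℝ) × (Fin N → ℝ), Function.Injective (fderiv ℝ Fh q) := by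
      intro q
      have hDH : HasFDerivAt H (fderiv ℝ H q) q := (hH.differentiable one_ne_zero q).hasFDerivAt
      have hD : HasFDerivAt Fh
          ((ContinuousLinearMap.fst ℝ (Fin N → ℝ) (Fin N → ℝ)).prod (fderiv ℝ H q)) q :=
        hasFDerivAt_fst.prodMk hDH
      have hfd : fderiv ℝ Fh q = (ContinuousLinearMap.fst ℝ (Fin N → ℝ) (Fin N → ℝ)).prod (fderiv ℝ H q) :=
        hD.fderiv
      have hin : HasFDerivAt (fun θ : (Fin N → ℝ) => ((q.1, θ) : (Fin N → ℝ) × (Fin N → ℝ)))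
          (ContinuousLinearMap.inr ℝ (Fin N → ℝ) (Fin N → ℝ)) q.2 := by
        have h := (hasFDerivAt_const (𝕜 := ℝ) q.1 q.2).prodMk (hasFDerivAt_id (𝕜 := ℝ) q.2)
        exact h
      have hslice : HasFDerivAt (fun θ : (Fin N → ℝ) => H (q.1, θ))
          ((fderiv ℝ H q).comp (ContinuousLinearMap.inr ℝ (Fin N → ℝ) (Fin N → ℝ))) q.2 :=
        by have hc := HasFDerivAt.comp q.2 hDH hin; exact hc
      intro v w h
      have h0 : fderiv ℝ Fh q (v - w) = 0 := by rw [map_sub, h, sub_self]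
      rw [hfd] at h0
      have hu1 : (v - w).1 = 0 := congrArg Prod.fst h0
      have hu2 : fderiv ℝ H q (v - w) = 0 := congrArg Prod.snd h0
      have hueq : ContinuousLinearMap.inr ℝ (Fin N → ℝ) (Fin N → ℝ) (v - w).2 = v - w := by
        refine Prod.ext ?_ rfl
        simpa using hu1.symm
      have hbound : ‖(v - w).2‖ ≤ (N : ℝ) *
          ‖((fderiv ℝ H q).comp (ContinuousLinearMap.inr ℝ (Fin N → ℝ) (Fin N → ℝ))) (v - w).2‖ :=
        aux_fderiv_antilip hslice (fun y z => hganti q.1 y z) (v - w).2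
      have hz : ((fderiv ℝ H q).comp (ContinuousLinearMap.inr ℝ (Fin N → ℝ) (Fin N → ℝ))) (v - w).2 = 0 := by
        rw [ContinuousLinearMap.comp_apply, hueq, hu2]
      rw [hz, norm_zero, mul_zero] at hbound
      have h2z : (v - w).2 = 0 := norm_le_zero_iff.mp hbound
      have : v - w = 0 := by
        refine Prod.ext ?_ ?_
        · simpa using hu1
        · simpa using h2z
      exact sub_eq_zero.mp this
    have hFhinv : ContDiff ℝ 1 (Function.invFun Fh) :=
      aux_invFun_contDiff hFhC1 hFhbij hFhder
    refine ⟨fun q => (Function.invFun Fh q).2, contDiff_snd.comp hFhinv, ?_⟩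
    intro x' p i
    have hr : Fh (Function.invFun Fh (x', p)) = (x', p) :=
      Function.rightInverse_invFun hFhbij.2 (x', p)
    have hr1 : (Function.invFun Fh (x', p)).1 = x' := congrArg Prod.fst hr
    have hr2 : H (Function.invFun Fh (x', p)) = p := congrArg Prod.snd hr
    have := congrFun hr2 i
    simp only [hHdef] at this
    rw [hr1] at this
    exact this.symm
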